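/- arXiv:2406.08892 — 2 statements merged into one kernel-verified Lean document; each statement's English description precedes it below -/
import Mathlib

section
/- For 0 < b < 1, q > 0, j ∈ {0,1}, and w ≥ 0: ∫₀¹ κ^{q+j}(1−κ)^{b−2}(exp(w(1−κ)) − 1) dκ = ((q+j)·B(q+j,b)/(b−1)) · (M(b−1, b+q+j, w) − 1). -/
/-- Kummer's confluent hypergeometric function `M(a, c, w)`. -/
noncomputable def kummerM (a c w : ℝ) : ℝ :=
  ∑' i : ℕ, ((ascPochhammer ℝ i).eval a / (ascPochhammer ℝ i).eval c) * w ^ i / (Nat.factorial i)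

/-- The Beta function as an integral. -/
noncomputable def betaFn (x y : ℝ) : ℝ :=
  ∫ t in (0:ℝ)..1, t ^ (x - 1) * (1 - t) ^ (y - 1)

open MeasureTheory Real Set

lemma betaFn_complex {x y : ℝ} (hx : 0 < x) (hy : 0 < y) :
    (betaFn x y : ℂ) = Complex.betaIntegral x y := by
  rw [betaFn, Complex.betaIntegral, ← intervalIntegral.integral_ofReal]
  refine intervalIntegral.integral_congr fun t ht => ?_
  rw [Set.uIcc_of_le (by norm_num : (0:ℝ) ≤ 1)] at ht
  push_cast
  rw [Complex.ofReal_cpow ht.1, Complex.ofReal_cpow (by linarith [ht.2] : (0:ℝ) ≤ 1 - t)]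
  push_cast
  ring

lemma betaFn_eq_Gamma {x y : ℝ} (hx : 0 < x) (hy : 0 < y) :
    betaFn x y = Real.Gamma x * Real.Gamma y / Real.Gamma (x + y) := by
  have h := Complex.Gamma_mul_Gamma_eq_betaIntegral
    (s := (x:ℂ)) (t := (y:ℂ)) (by simpa using hx) (by simpa using hy)
  rw [← betaFn_complex hx hy, ← Complex.ofReal_add, Complex.Gamma_ofReal, Complex.Gamma_ofReal,
    Complex.Gamma_ofReal, ← Complex.ofReal_mul, ← Complex.ofReal_mul] at h
  have h2 := Complex.ofReal_injective h
  have hG : Real.Gamma (x + y) ≠ 0 := (Real.Gamma_pos_of_pos (by linarith)).ne'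
  field_simp
  linarith [h2]

lemma betaFn_integrableOn {x y : ℝ} (hx : 0 < x) (hy : 0 < y) :
    IntegrableOn (fun t : ℝ => t ^ (x - 1) * (1 - t) ^ (y - 1)) (Set.Ioc 0 1) := by
  have h := (Complex.betaIntegral_convergent (u := (x:ℂ)) (v := (y:ℂ))
    (by simpa using hx) (by simpa using hy))
  rw [intervalIntegrable_iff_integrableOn_Ioc_of_le (by norm_num)] at h
  have h2 : IntegrableOn
      (fun t : ℝ => ((t:ℂ) ^ ((x:ℂ) - 1) * (1 - (t:ℂ)) ^ ((y:ℂ) - 1)).re) (Set.Ioc 0 1) := h.re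
  refine h2.congr_fun (fun t ht => ?_) measurableSet_Ioc
  have h1t : (0:ℝ) ≤ 1 - t := by linarith [ht.2]
  dsimp only
  rw [show ((t:ℂ) ^ ((x:ℂ) - 1) * (1 - (t:ℂ)) ^ ((y:ℂ) - 1))
      = ((t ^ (x-1) * (1-t) ^ (y-1) : ℝ) : ℂ) from ?_]
  · simp
  · push_cast
    rw [Complex.ofReal_cpow ht.1.le, Complex.ofReal_cpow h1t]
    push_cast
    ring


lemma gamma_poch (a : ℝ) (ha : ∀ k : ℕ, a + k ≠ 0) (n : ℕ) :
    Real.Gamma (a + n) = (ascPochhammer ℝ n).eval a * Real.Gamma a := by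
  induction n with
  | zero => simp
  | succ n ih =>
    have : a + (n + 1 : ℕ) = (a + n) + 1 := by push_cast; ring
    rw [this, Real.Gamma_add_one (ha n), ih, ascPochhammer_succ_eval]
    ring

lemma exp_sub_one (x : ℝ) :
    Real.exp x - 1 = ∑' n : ℕ, x ^ (n + 1) / ((n + 1).factorial : ℝ) := by
  have hs : Summable (fun n : ℕ => x ^ n / (n.factorial : ℝ)) :=
    Real.summable_pow_div_factorial x
  have h : Real.exp x = ∑' n : ℕ, x ^ n / (n.factorial : ℝ) := by
    rw [Real.exp_eq_exp_ℝ, NormedSpace.exp_eq_tsum_div]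
  rw [h, Summable.tsum_eq_zero_add hs]
  simp


set_option maxHeartbeats 1000000 in
theorem main_aux (b p w : ℝ) (hb0 : 0 < b) (hb1 : b < 1) (hp : 0 < p) (hw : 0 ≤ w) :
    ∫ κ in (0:ℝ)..1, κ ^ p * (1 - κ) ^ (b - 2) * (Real.exp (w * (1 - κ)) - 1)
      = (p * betaFn p b / (b - 1)) * (kummerM (b - 1) (b + p) w - 1) := by
  have hb1' : b - 1 ≠ 0 := by linarith
  set C : ℝ := p * betaFn p b / (b - 1) with hC
  set S : ℕ → ℝ := fun i =>
    ((ascPochhammer ℝ i).eval (b - 1) / (ascPochhammer ℝ i).eval (b + p)) * w ^ i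
      / (Nat.factorial i) with hS
  set F : ℕ → ℝ → ℝ := fun n t =>
    (w ^ (n + 1) / ((n + 1).factorial : ℝ)) * (t ^ p * (1 - t) ^ (b - 1 + n)) with hF
  -- basic nonvanishing facts
  have hΓb1 : Real.Gamma (b - 1) ≠ 0 := by
    apply Real.Gamma_ne_zero
    intro m
    match m with
    | 0 => simpa using hb1'
    | (m + 1) =>
      have : (0:ℝ) ≤ (m:ℝ) := Nat.cast_nonneg m
      push_cast
      intro hcon
      nlinarith
  have ha : ∀ k : ℕ, (b - 1) + k ≠ 0 := by
    intro k
    match k with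
    | 0 => simpa using hb1'
    | (k + 1) =>
      have : (0:ℝ) ≤ (k:ℝ) := Nat.cast_nonneg k
      push_cast
      intro hcon
      nlinarith
  have hc : ∀ k : ℕ, (b + p) + k ≠ 0 := by
    intro k
    have : (0:ℝ) ≤ k := Nat.cast_nonneg k
    positivity
  have hbn : ∀ n : ℕ, (0:ℝ) < b + n := fun n => by positivity
  -- Pochhammer evaluations
  have hpoch1 : ∀ n : ℕ, (ascPochhammer ℝ (n + 1)).eval (b - 1)
      = Real.Gamma (b + n) / Real.Gamma (b - 1) := by
    intro n
    have h := gamma_poch (b - 1) ha (n + 1)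
    rw [show (b - 1) + ((n + 1 : ℕ) : ℝ) = b + n by push_cast; ring] at h
    rw [eq_div_iff hΓb1]
    linarith
  have hΓbp : Real.Gamma (b + p) ≠ 0 := (Real.Gamma_pos_of_pos (by linarith)).ne'
  have hpoch2 : ∀ n : ℕ, (ascPochhammer ℝ (n + 1)).eval (b + p)
      = Real.Gamma (b + p + (n + 1)) / Real.Gamma (b + p) := by
    intro n
    have h := gamma_poch (b + p) hc (n + 1)
    rw [eq_div_iff hΓbp]
    push_cast at h ⊢
    linarith
  -- termwise identity
  have hterm : ∀ n : ℕ,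
      (w ^ (n + 1) / ((n + 1).factorial : ℝ)) * betaFn (p + 1) (b + n) = C * S (n + 1) := by
    intro n
    have hb' := betaFn_eq_Gamma (x := p + 1) (y := b + n) (by linarith) (hbn n)
    have hbpb := betaFn_eq_Gamma (x := p) (y := b) hp hb0
    have hΓp1 : Real.Gamma (p + 1) = p * Real.Gamma p := Real.Gamma_add_one hp.ne'
    have hΓb : Real.Gamma b = (b - 1) * Real.Gamma (b - 1) := by
      have := Real.Gamma_add_one hb1'
      rw [show b - 1 + 1 = b by ring] at this
      exact this
    have hGsame : Real.Gamma (p + 1 + (b + n)) = Real.Gamma (b + p + ((n:ℝ) + 1)) := by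
      congr 1; ring
    have hΓbnn : Real.Gamma (b + n) ≠ 0 := (Real.Gamma_pos_of_pos (hbn n)).ne'
    have hΓbig : Real.Gamma (b + p + ((n:ℝ) + 1)) ≠ 0 :=
      (Real.Gamma_pos_of_pos (by positivity)).ne'
    have hΓpb : Real.Gamma (p + b) ≠ 0 := (Real.Gamma_pos_of_pos (by linarith)).ne'
    have hfact : ((n + 1).factorial : ℝ) ≠ 0 := by positivity
    simp only [hC, hS]
    rw [hb', hbpb, hpoch1 n, hpoch2 n, hGsame, hΓp1, hΓb, show p + b = b + p from add_comm p b]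
    push_cast
    field_simp
  -- values of the set integrals
  have hIoc : ∀ n : ℕ, IntegrableOn (fun t : ℝ => t ^ p * (1 - t) ^ (b - 1 + n))
      (Set.Ioc (0:ℝ) 1) := by
    intro n
    have := betaFn_integrableOn (x := p + 1) (y := b + n) (by linarith) (hbn n)
    simpa [show p + 1 - 1 = p by ring, show b + (n:ℝ) - 1 = b - 1 + n by ring] using this
  have hFint : ∀ n : ℕ, IntegrableOn (F n) (Set.Ioc (0:ℝ) 1) := fun n =>
    ((hIoc n).const_mul _)
  have hFval : ∀ n : ℕ, ∫ t in Set.Ioc (0:ℝ) 1, F n t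
      = (w ^ (n + 1) / ((n + 1).factorial : ℝ)) * betaFn (p + 1) (b + n) := by
    intro n
    rw [hF]
    simp only [MeasureTheory.integral_const_mul]
    congr 1
    rw [betaFn, intervalIntegral.integral_of_le (by norm_num : (0:ℝ) ≤ 1)]
    refine setIntegral_congr_fun measurableSet_Ioc (fun t ht => ?_)
    rw [show p + 1 - 1 = p by ring, show b + (n:ℝ) - 1 = b - 1 + n by ring]
  -- positivity and bound for betaFn
  have hBpos : ∀ n : ℕ, 0 < betaFn (p + 1) (b + n) := by
    intro n
    rw [betaFn_eq_Gamma (by linarith) (hbn n)]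
    have h1 := Real.Gamma_pos_of_pos (show (0:ℝ) < p + 1 by linarith)
    have h2 := Real.Gamma_pos_of_pos (hbn n)
    have h3 := Real.Gamma_pos_of_pos (show (0:ℝ) < p + 1 + (b + n) by positivity)
    positivity
  have hbn1 : ∀ n : ℕ, b + (n:ℝ) - 1 ≠ 0 := by
    intro n
    match n with
    | 0 => simpa using hb1'
    | (n + 1) =>
      have : (0:ℝ) ≤ (n:ℝ) := Nat.cast_nonneg n
      push_cast
      intro hcon
      nlinarith
  have hBle : ∀ n : ℕ, betaFn (p + 1) (b + n) ≤ 1 / b := by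
    intro n
    have h1b : betaFn 1 b = 1 / b := by
      rw [betaFn_eq_Gamma one_pos hb0, Real.Gamma_one, show (1:ℝ) + b = b + 1 from add_comm 1 b,
        Real.Gamma_add_one hb0.ne']
      field_simp [(Real.Gamma_pos_of_pos hb0).ne']
    rw [← h1b, betaFn, betaFn, intervalIntegral.integral_of_le (by norm_num : (0:ℝ) ≤ 1),
      intervalIntegral.integral_of_le (by norm_num : (0:ℝ) ≤ 1)]
    refine setIntegral_mono_on (betaFn_integrableOn (by linarith) (hbn n))
      (betaFn_integrableOn one_pos hb0) measurableSet_Ioc (fun t ht => ?_)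
    rw [show (1:ℝ) - 1 = 0 by ring, Real.rpow_zero, one_mul]
    rcases eq_or_lt_of_le (show (0:ℝ) ≤ 1 - t by linarith [ht.2]) with h0 | h0
    · rw [← h0, Real.zero_rpow (hbn1 n), Real.zero_rpow (by simpa using hb1' : b - 1 ≠ 0)]
      simp [Real.rpow_nonneg ht.1.le]
    · calc t ^ (p + 1 - 1) * (1 - t) ^ (b + (n:ℝ) - 1)
          ≤ 1 * (1 - t) ^ (b - 1) := by
            apply mul_le_mul
            · rw [show p + 1 - 1 = p by ring]
              exact Real.rpow_le_one ht.1.le ht.2 hp.le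
            · exact Real.rpow_le_rpow_of_exponent_ge h0 (by linarith [ht.1])
                (by linarith [Nat.cast_nonneg (α := ℝ) n])
            · exact Real.rpow_nonneg (by linarith) _
            · norm_num
        _ = (1 - t) ^ (b - 1) := one_mul _
  -- summability
  have hsum0 : Summable (fun n : ℕ => w ^ (n + 1) / ((n + 1).factorial : ℝ)) :=
    (summable_nat_add_iff 1).mpr (Real.summable_pow_div_factorial w)
  have hsum : Summable (fun n : ℕ =>
      (w ^ (n + 1) / ((n + 1).factorial : ℝ)) * betaFn (p + 1) (b + n)) := by
    refine Summable.of_nonneg_of_le (fun n => mul_nonneg (by positivity) (hBpos n).le)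
      (fun n => ?_) (hsum0.mul_right (1 / b))
    exact mul_le_mul_of_nonneg_left (hBle n) (by positivity)
  -- swap sum and integral over Ioo
  have hFintIoo : ∀ n : ℕ, Integrable (F n) (volume.restrict (Set.Ioo (0:ℝ) 1)) :=
    fun n => (hFint n).mono_set Set.Ioo_subset_Ioc_self
  have hFnn : ∀ n : ℕ, ∀ t ∈ Set.Ioc (0:ℝ) 1, 0 ≤ F n t := by
    intro n t ht
    exact mul_nonneg (by positivity)
      (mul_nonneg (Real.rpow_nonneg ht.1.le _) (Real.rpow_nonneg (by linarith [ht.2]) _))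
  have hnormIoo : (fun n : ℕ => ∫ t in Set.Ioo (0:ℝ) 1, ‖F n t‖)
      = fun n : ℕ => (w ^ (n + 1) / ((n + 1).factorial : ℝ)) * betaFn (p + 1) (b + n) := by
    funext n
    rw [← integral_Ioc_eq_integral_Ioo, ← hFval n]
    exact setIntegral_congr_fun measurableSet_Ioc fun t ht => norm_of_nonneg (hFnn n t ht)
  have hswap : ∑' n : ℕ, ∫ t in Set.Ioo (0:ℝ) 1, F n t
      = ∫ t in Set.Ioo (0:ℝ) 1, ∑' n : ℕ, F n t := by
    refine integral_tsum_of_summable_integral_norm hFintIoo ?_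
    rw [hnormIoo]
    exact hsum
  -- pointwise series expansion
  have hpt : ∀ t ∈ Set.Ioo (0:ℝ) 1, (∑' n : ℕ, F n t)
      = t ^ p * (1 - t) ^ (b - 2) * (Real.exp (w * (1 - t)) - 1) := by
    intro t ht
    have h1t : (0:ℝ) < 1 - t := by linarith [ht.2]
    rw [exp_sub_one (w * (1 - t)), ← tsum_mul_left]
    refine tsum_congr fun n => ?_
    simp only [hF]
    rw [mul_pow, show b - 1 + (n:ℝ) = (b - 2) + ((n:ℝ) + 1) by ring, Real.rpow_add h1t,
      show ((n:ℝ) + 1) = ((n + 1 : ℕ) : ℝ) by push_cast; ring, Real.rpow_natCast]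
    ring
  -- kummerM tail
  have hCne : C ≠ 0 := by
    have hBpos0 : 0 < betaFn p b := by
      rw [betaFn_eq_Gamma hp hb0]
      have h1 := Real.Gamma_pos_of_pos hp
      have h2 := Real.Gamma_pos_of_pos hb0
      have h3 := Real.Gamma_pos_of_pos (show (0:ℝ) < p + b by linarith)
      positivity
    exact div_ne_zero (mul_ne_zero hp.ne' hBpos0.ne') hb1'
  have hSsum1 : Summable (fun n : ℕ => S (n + 1)) := by
    refine (hsum.mul_left C⁻¹).congr fun n => ?_
    rw [hterm n, ← mul_assoc, inv_mul_cancel₀ hCne, one_mul]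
  have hSsum : Summable S := (summable_nat_add_iff 1).mp hSsum1
  have hS0 : S 0 = 1 := by simp [hS]
  have htail : ∑' n : ℕ, S (n + 1) = kummerM (b - 1) (b + p) w - 1 := by
    have h := Summable.tsum_eq_zero_add hSsum
    have hk : kummerM (b - 1) (b + p) w = ∑' i : ℕ, S i := by rw [kummerM, hS]
    rw [hk, h, hS0]
    ring
  -- assembly
  calc ∫ κ in (0:ℝ)..1, κ ^ p * (1 - κ) ^ (b - 2) * (Real.exp (w * (1 - κ)) - 1)
      = ∫ t in Set.Ioc (0:ℝ) 1, t ^ p * (1 - t) ^ (b - 2) * (Real.exp (w * (1 - t)) - 1) :=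
        intervalIntegral.integral_of_le (by norm_num)
    _ = ∫ t in Set.Ioo (0:ℝ) 1, t ^ p * (1 - t) ^ (b - 2) * (Real.exp (w * (1 - t)) - 1) :=
        integral_Ioc_eq_integral_Ioo
    _ = ∫ t in Set.Ioo (0:ℝ) 1, ∑' n : ℕ, F n t :=
        setIntegral_congr_fun measurableSet_Ioo fun t ht => (hpt t ht).symm
    _ = ∑' n : ℕ, ∫ t in Set.Ioo (0:ℝ) 1, F n t := hswap.symm
    _ = ∑' n : ℕ, (w ^ (n + 1) / ((n + 1).factorial : ℝ)) * betaFn (p + 1) (b + n) := by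
        refine tsum_congr fun n => ?_
        rw [← integral_Ioc_eq_integral_Ioo]
        exact hFval n
    _ = ∑' n : ℕ, C * S (n + 1) := tsum_congr hterm
    _ = C * ∑' n : ℕ, S (n + 1) := tsum_mul_left
    _ = C * (kummerM (b - 1) (b + p) w - 1) := by rw [htail]

theorem integral_b_minus_two (b q j w : ℝ) (hb0 : 0 < b) (hb1 : b < 1)
    (hq : 0 < q) (hj : j = 0 ∨ j = 1) (hw : 0 ≤ w) :
    ∫ κ in (0:ℝ)..1, κ ^ (q + j) * (1 - κ) ^ (b - 2) * (Real.exp (w * (1 - κ)) - 1)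
      = ((q + j) * betaFn (q + j) b / (b - 1)) * (kummerM (b - 1) (b + q + j) w - 1) := by
  have hp : 0 < q + j := by rcases hj with h | h <;> rw [h] <;> linarith
  have h := main_aux b (q + j) w hb0 hb1 hp hw
  rw [show b + q + j = b + (q + j) by ring]
  exact h
end

section
/- For 0 < b < 1, q > 0, and all w ≥ 0, the confluent hypergeometric function satisfies M(b−1, b+q+1, w) ≥ M(b−1, b+q, w) and M(b, b+q, w) ≥ M(b, b+q+1, w) ≥ 1 > 0. -/
private lemma asc_mono {x y : ℝ} (hx : 0 < x) (hxy : x ≤ y) (n : ℕ) :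
    (ascPochhammer ℝ n).eval x ≤ (ascPochhammer ℝ n).eval y := by
  induction n with
  | zero => simp
  | succ n ih =>
      rw [ascPochhammer_succ_eval, ascPochhammer_succ_eval]
      have h1 : (0:ℝ) < (ascPochhammer ℝ n).eval x := ascPochhammer_pos n x hx
      have h2 : (0:ℝ) ≤ x + n := by positivity
      exact mul_le_mul ih (by linarith) h2 ((h1.trans_le ih).le)

private lemma asc_succ_left (n : ℕ) (x : ℝ) :
    (ascPochhammer ℝ (n + 1)).eval x = x * (ascPochhammer ℝ n).eval (x + 1) := by
  rw [ascPochhammer_succ_left]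
  simp [Polynomial.eval_comp]

theorem kummer_inequalities (b q w : ℝ) (hb0 : 0 < b) (hb1 : b < 1) (hq : 0 < q) (hw : 0 ≤ w) :
    kummerM (b - 1) (b + q + 1) w ≥ kummerM (b - 1) (b + q) w ∧
    kummerM b (b + q) w ≥ kummerM b (b + q + 1) w ∧
    kummerM b (b + q + 1) w ≥ 1 ∧ (1:ℝ) > 0 := by
  have hc : (0:ℝ) < b + q := by linarith
  have hc1 : (0:ℝ) < b + q + 1 := by linarith
  -- positivity of Pochhammer values
  have hPb : ∀ n, (0:ℝ) < (ascPochhammer ℝ n).eval b := fun n => ascPochhammer_pos n b hb0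
  have hPc : ∀ n, (0:ℝ) < (ascPochhammer ℝ n).eval (b + q) := fun n => ascPochhammer_pos n _ hc
  have hPc1 : ∀ n, (0:ℝ) < (ascPochhammer ℝ n).eval (b + q + 1) :=
    fun n => ascPochhammer_pos n _ hc1
  have hmono : ∀ n, (ascPochhammer ℝ n).eval (b + q) ≤ (ascPochhammer ℝ n).eval (b + q + 1) :=
    fun n => asc_mono hc (by linarith) n
  -- a = b - 1 : values of Pochhammer
  have hneg : ∀ n, (ascPochhammer ℝ (n + 1)).eval (b - 1) = (b - 1) * (ascPochhammer ℝ n).eval b := by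
    intro n; rw [asc_succ_left]; ring_nf
  have hnegle : ∀ n, (ascPochhammer ℝ (n + 1)).eval (b - 1) ≤ 0 := by
    intro n; rw [hneg n]
    exact mul_nonpos_of_nonpos_of_nonneg (by linarith) (hPb n).le
  -- summability bounds
  set K : ℝ := max 1 ((1 - b) / (b + q)) with hK
  have hK1 : (1:ℝ) ≤ K := le_max_left _ _
  have habs : ∀ (c : ℝ), 0 < c → b + q ≤ c → ∀ n : ℕ,
      |((ascPochhammer ℝ n).eval (b - 1) / (ascPochhammer ℝ n).eval c) * w ^ n / (Nat.factorial n)|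
        ≤ K * (w ^ n / (Nat.factorial n)) := by
    intro c hcpos hbc n
    have hPcn : (0:ℝ) < (ascPochhammer ℝ n).eval c := ascPochhammer_pos n c hcpos
    have hwn : (0:ℝ) ≤ w ^ n / (Nat.factorial n) := by positivity
    have hratio : |(ascPochhammer ℝ n).eval (b - 1) / (ascPochhammer ℝ n).eval c| ≤ K := by
      rw [abs_div, abs_of_pos hPcn, div_le_iff₀ hPcn]
      cases n with
      | zero => simpa using le_mul_of_one_le_left hPcn.le hK1  |>.trans_eq' (by simp)
      | succ m =>
          have h1 : |(ascPochhammer ℝ (m + 1)).eval (b - 1)|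
              = (1 - b) * (ascPochhammer ℝ m).eval b := by
            rw [hneg m, abs_mul, abs_of_nonpos (by linarith : b - 1 ≤ 0),
              abs_of_pos (hPb m)]; ring_nf
          rw [h1]
          have h2 : (ascPochhammer ℝ m).eval b ≤ (ascPochhammer ℝ m).eval (c + 1) :=
            asc_mono hb0 (by linarith) m
          have h3 : (ascPochhammer ℝ (m + 1)).eval c = c * (ascPochhammer ℝ m).eval (c + 1) :=
            asc_succ_left m c
          have hKge : (1 - b) / (b + q) ≤ K := le_max_right _ _
          have hPc1m : (0:ℝ) < (ascPochhammer ℝ m).eval (c + 1) :=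
            ascPochhammer_pos m _ (by linarith)
          have h4 : (1 - b) * (ascPochhammer ℝ m).eval b
              ≤ (1 - b) * (ascPochhammer ℝ m).eval (c + 1) :=
            mul_le_mul_of_nonneg_left h2 (by linarith)
          have h5 : (1 - b) ≤ K * c := by
            have h6 : 1 - b ≤ K * (b + q) := (div_le_iff₀ hc).mp hKge
            nlinarith [mul_le_mul_of_nonneg_left hbc (by linarith : (0:ℝ) ≤ K)]
          calc (1 - b) * (ascPochhammer ℝ m).eval b
              ≤ (1 - b) * (ascPochhammer ℝ m).eval (c + 1) := h4
            _ ≤ (K * c) * (ascPochhammer ℝ m).eval (c + 1) :=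
                mul_le_mul_of_nonneg_right h5 hPc1m.le
            _ = K * (ascPochhammer ℝ (m + 1)).eval c := by rw [h3]; ring
    calc |((ascPochhammer ℝ n).eval (b - 1) / (ascPochhammer ℝ n).eval c) * w ^ n / (Nat.factorial n)|
        = |(ascPochhammer ℝ n).eval (b - 1) / (ascPochhammer ℝ n).eval c| * (w ^ n / (Nat.factorial n)) := by
          rw [abs_div, abs_mul, abs_div, abs_of_nonneg (pow_nonneg hw n),
            abs_of_nonneg (by positivity : (0:ℝ) ≤ (Nat.factorial n : ℝ))]
          ring
      _ ≤ K * (w ^ n / (Nat.factorial n)) := mul_le_mul_of_nonneg_right hratio hwn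
  have hsumK : Summable (fun n : ℕ => K * (w ^ n / (Nat.factorial n))) :=
    (Real.summable_pow_div_factorial w).mul_left K
  have hsumA : ∀ (c : ℝ), 0 < c → b + q ≤ c → Summable (fun n : ℕ =>
      ((ascPochhammer ℝ n).eval (b - 1) / (ascPochhammer ℝ n).eval c) * w ^ n / (Nat.factorial n)) := by
    intro c hcpos hbc
    apply Summable.of_abs
    exact hsumK.of_nonneg_of_le (fun n => abs_nonneg _) (habs c hcpos hbc)
  have hsA1 := hsumA (b + q) hc le_rfl
  have hsA2 := hsumA (b + q + 1) hc1 (by linarith)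
  -- a = b : terms in [0, w^n/n!]
  have hBle : ∀ (c : ℝ), 0 < c → b ≤ c → ∀ n : ℕ,
      ((ascPochhammer ℝ n).eval b / (ascPochhammer ℝ n).eval c) * w ^ n / (Nat.factorial n)
        ≤ w ^ n / (Nat.factorial n) := by
    intro c hcpos hbc n
    have hPcn : (0:ℝ) < (ascPochhammer ℝ n).eval c := ascPochhammer_pos n c hcpos
    have h1 : (ascPochhammer ℝ n).eval b / (ascPochhammer ℝ n).eval c ≤ 1 :=
      (div_le_one hPcn).mpr (asc_mono hb0 hbc n)
    have hwn : (0:ℝ) ≤ w ^ n := pow_nonneg hw n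
    have : ((ascPochhammer ℝ n).eval b / (ascPochhammer ℝ n).eval c) * w ^ n ≤ w ^ n := by
      nlinarith
    exact div_le_div_of_nonneg_right this (by positivity) |>.trans_eq (by ring_nf)
  have hBnn : ∀ (c : ℝ), 0 < c → ∀ n : ℕ,
      0 ≤ ((ascPochhammer ℝ n).eval b / (ascPochhammer ℝ n).eval c) * w ^ n / (Nat.factorial n) := by
    intro c hcpos n
    have hPcn : (0:ℝ) < (ascPochhammer ℝ n).eval c := ascPochhammer_pos n c hcpos
    have := hPb n
    positivity
  have hsumB : ∀ (c : ℝ), 0 < c → b ≤ c → Summable (fun n : ℕ =>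
      ((ascPochhammer ℝ n).eval b / (ascPochhammer ℝ n).eval c) * w ^ n / (Nat.factorial n)) := by
    intro c hcpos hbc
    exact (Real.summable_pow_div_factorial w).of_nonneg_of_le (hBnn c hcpos) (hBle c hcpos hbc)
  have hsB1 := hsumB (b + q) hc (by linarith)
  have hsB2 := hsumB (b + q + 1) hc1 (by linarith)
  refine ⟨?_, ?_, ?_, one_pos⟩
  · -- M(b-1, b+q+1, w) ≥ M(b-1, b+q, w)
    apply Summable.tsum_le_tsum _ hsA1 hsA2
    intro n
    cases n with
    | zero => simp
    | succ m =>
        have hnum := hnegle m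
        have h1 := hPc (m + 1)
        have h2 := hPc1 (m + 1)
        have hmono' := hmono (m + 1)
        have hinv : 1 / (ascPochhammer ℝ (m+1)).eval (b + q + 1)
            ≤ 1 / (ascPochhammer ℝ (m+1)).eval (b + q) :=
          one_div_le_one_div_of_le h1 hmono'
        have hdiv : (ascPochhammer ℝ (m+1)).eval (b - 1) / (ascPochhammer ℝ (m+1)).eval (b + q)
            ≤ (ascPochhammer ℝ (m+1)).eval (b - 1) / (ascPochhammer ℝ (m+1)).eval (b + q + 1) := by
          have := mul_le_mul_of_nonpos_left hinv hnum
          simpa only [mul_one_div] using this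
        have hwn : (0:ℝ) ≤ w ^ (m+1) / (Nat.factorial (m+1)) := by positivity
        calc (ascPochhammer ℝ (m+1)).eval (b - 1) / (ascPochhammer ℝ (m+1)).eval (b + q) * w ^ (m+1) / (Nat.factorial (m+1))
            = ((ascPochhammer ℝ (m+1)).eval (b - 1) / (ascPochhammer ℝ (m+1)).eval (b + q)) * (w ^ (m+1) / (Nat.factorial (m+1))) := by ring
          _ ≤ ((ascPochhammer ℝ (m+1)).eval (b - 1) / (ascPochhammer ℝ (m+1)).eval (b + q + 1)) * (w ^ (m+1) / (Nat.factorial (m+1))) :=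
              mul_le_mul_of_nonneg_right hdiv hwn
          _ = (ascPochhammer ℝ (m+1)).eval (b - 1) / (ascPochhammer ℝ (m+1)).eval (b + q + 1) * w ^ (m+1) / (Nat.factorial (m+1)) := by ring
  · -- M(b, b+q, w) ≥ M(b, b+q+1, w)
    apply Summable.tsum_le_tsum _ hsB2 hsB1
    intro n
    have h1 := hPc n
    have h2 := hPc1 n
    have hnum := (hPb n).le
    have hdiv : (ascPochhammer ℝ n).eval b / (ascPochhammer ℝ n).eval (b + q + 1)
        ≤ (ascPochhammer ℝ n).eval b / (ascPochhammer ℝ n).eval (b + q) :=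
      div_le_div_of_nonneg_left hnum h1 (hmono n)
    have hwn : (0:ℝ) ≤ w ^ n / (Nat.factorial n) := by positivity
    calc (ascPochhammer ℝ n).eval b / (ascPochhammer ℝ n).eval (b + q + 1) * w ^ n / (Nat.factorial n)
        = ((ascPochhammer ℝ n).eval b / (ascPochhammer ℝ n).eval (b + q + 1)) * (w ^ n / (Nat.factorial n)) := by ring
      _ ≤ ((ascPochhammer ℝ n).eval b / (ascPochhammer ℝ n).eval (b + q)) * (w ^ n / (Nat.factorial n)) :=
          mul_le_mul_of_nonneg_right hdiv hwn
      _ = (ascPochhammer ℝ n).eval b / (ascPochhammer ℝ n).eval (b + q) * w ^ n / (Nat.factorial n) := by ring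
  · -- M(b, b+q+1, w) ≥ 1
    have h0 : ((ascPochhammer ℝ 0).eval b / (ascPochhammer ℝ 0).eval (b + q + 1)) * w ^ 0 / (Nat.factorial 0) = 1 := by
      simp
    calc (1:ℝ) = ((ascPochhammer ℝ 0).eval b / (ascPochhammer ℝ 0).eval (b + q + 1)) * w ^ 0 / (Nat.factorial 0) := h0.symm
      _ ≤ kummerM b (b + q + 1) w := Summable.le_tsum hsB2 0 (fun n _ => hBnn _ hc1 n)
end
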